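/- If X₁ and X₂ are two independent random vectors, with values in ℝ^{d₁} and ℝ^{d₂} respectively, such that X₁ belongs to the class C(d₁,b₁) and X₂ belongs to the class C(d₂,b₂) for some b₁,b₂>0, then the random vector (X₁,X₂) with values in ℝ^{d₁+d₂} belongs to the class C(d₁+d₂, max(b₁,b₂)). -/

import Mathlib

open MeasureTheory ProbabilityTheory RealInnerProductSpace

/-- The characteristic function of a measure on a real inner product space. -/
noncomputable def charFn {E : Type*} [NormedAddCommGroup E] [InnerProductSpace ℝ E]
    [MeasurableSpace E] (μ : Measure E) (t : E) : ℂ :=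
  ∫ x, Complex.exp ((⟪t, x⟫ : ℝ) * Complex.I) ∂μ

/-- The weak Cramer class `C(d,b)`: the characteristic function satisfies
`|φ(t)| ≤ 1 - C/‖t‖^b` for `‖t‖` large enough. -/
def memClassC {E : Type*} [NormedAddCommGroup E] [InnerProductSpace ℝ E]
    [MeasurableSpace E] (μ : Measure E) (b : ℝ) : Prop :=
  ∃ C > (0 : ℝ), ∃ R > (0 : ℝ), ∀ t : E, R < ‖t‖ → ‖charFn μ t‖ ≤ 1 - C / ‖t‖ ^ b

noncomputable def combineE {d₁ d₂ : ℕ} (x₁ : EuclideanSpace ℝ (Fin d₁))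
    (x₂ : EuclideanSpace ℝ (Fin d₂)) : EuclideanSpace ℝ (Fin (d₁ + d₂)) :=
  (WithLp.equiv 2 (Fin (d₁ + d₂) → ℝ)).symm (fun i =>
    Sum.elim (fun j => WithLp.equiv 2 (Fin d₁ → ℝ) x₁ j)
      (fun j => WithLp.equiv 2 (Fin d₂ → ℝ) x₂ j) (finSumFinEquiv.symm i))

noncomputable def splitE₁ {d₁ d₂ : ℕ} (t : EuclideanSpace ℝ (Fin (d₁ + d₂))) :
    EuclideanSpace ℝ (Fin d₁) :=
  (WithLp.equiv 2 (Fin d₁ → ℝ)).symm (fun j => t (finSumFinEquiv (Sum.inl j)))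

noncomputable def splitE₂ {d₁ d₂ : ℕ} (t : EuclideanSpace ℝ (Fin (d₁ + d₂))) :
    EuclideanSpace ℝ (Fin d₂) :=
  (WithLp.equiv 2 (Fin d₂ → ℝ)).symm (fun j => t (finSumFinEquiv (Sum.inr j)))

lemma inner_combineE {d₁ d₂ : ℕ} (x₁ y₁ : EuclideanSpace ℝ (Fin d₁))
    (x₂ y₂ : EuclideanSpace ℝ (Fin d₂)) :
    (⟪combineE x₁ x₂, combineE y₁ y₂⟫ : ℝ) = ⟪x₁, y₁⟫ + ⟪x₂, y₂⟫ := by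
  simp only [PiLp.inner_apply, RCLike.inner_apply, conj_trivial, combineE]
  rw [← Equiv.sum_comp finSumFinEquiv, Fintype.sum_sum_type]
  simp [WithLp.equiv_apply, WithLp.equiv_symm_apply, PiLp.toLp_apply, finSumFinEquiv_apply_left, finSumFinEquiv_apply_right,
    finSumFinEquiv_symm_apply_castAdd, finSumFinEquiv_symm_apply_natAdd]

lemma combine_splitE {d₁ d₂ : ℕ} (t : EuclideanSpace ℝ (Fin (d₁ + d₂))) :
    combineE (splitE₁ t) (splitE₂ t) = t := by
  ext i
  obtain ⟨s, rfl⟩ : ∃ s, finSumFinEquiv s = i := ⟨_, Equiv.apply_symm_apply _ _⟩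
  cases s <;>
    simp [combineE, splitE₁, splitE₂, WithLp.equiv_apply, WithLp.equiv_symm_apply, PiLp.toLp_apply, finSumFinEquiv_apply_left,
      finSumFinEquiv_apply_right, finSumFinEquiv_symm_apply_castAdd,
      finSumFinEquiv_symm_apply_natAdd]

lemma measurable_combineE {d₁ d₂ : ℕ} :
    Measurable (fun p : EuclideanSpace ℝ (Fin d₁) × EuclideanSpace ℝ (Fin d₂) =>
      combineE p.1 p.2) := by
  apply (MeasurableEquiv.toLp 2 (Fin (d₁ + d₂) → ℝ)).measurable.comp
  apply measurable_pi_lambda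
  intro i
  cases finSumFinEquiv.symm i with
  | inl j =>
      exact (measurable_pi_apply j).comp
        ((MeasurableEquiv.toLp 2 (Fin d₁ → ℝ)).symm.measurable.comp measurable_fst)
  | inr j =>
      exact (measurable_pi_apply j).comp
        ((MeasurableEquiv.toLp 2 (Fin d₂ → ℝ)).symm.measurable.comp measurable_snd)

lemma norm_charFn_le_one {E : Type*} [NormedAddCommGroup E] [InnerProductSpace ℝ E]
    [MeasurableSpace E] (μ : Measure E) [IsProbabilityMeasure μ] (t : E) :
    ‖charFn μ t‖ ≤ 1 := by
  have := norm_integral_le_of_norm_le_const (μ := μ)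
    (f := fun x => Complex.exp ((⟪t, x⟫ : ℝ) * Complex.I)) (C := 1) ?_
  · simpa [charFn] using this
  · filter_upwards with x
    simp [Complex.norm_exp_ofReal_mul_I]

lemma continuous_charFn_integrand {E : Type*} [NormedAddCommGroup E] [InnerProductSpace ℝ E]
    (t : E) : Continuous (fun x : E => Complex.exp ((⟪t, x⟫ : ℝ) * Complex.I)) :=
  Complex.continuous_exp.comp
    ((Complex.continuous_ofReal.comp (continuous_const.inner continuous_id)).mul continuous_const)


theorem statement1'
    {Ω : Type*} [MeasureSpace Ω] [IsProbabilityMeasure (ℙ : Measure Ω)]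
    {d₁ d₂ : ℕ}
    (X₁ : Ω → EuclideanSpace ℝ (Fin d₁)) (X₂ : Ω → EuclideanSpace ℝ (Fin d₂))
    (hX₁ : Measurable X₁) (hX₂ : Measurable X₂)
    (hindep : IndepFun X₁ X₂ ℙ)
    {b₁ b₂ : ℝ} (hb₁ : 0 < b₁) (hb₂ : 0 < b₂)
    (h₁ : memClassC (Measure.map X₁ ℙ) b₁)
    (h₂ : memClassC (Measure.map X₂ ℙ) b₂) :
    memClassC (Measure.map (fun ω => combineE (X₁ ω) (X₂ ω)) ℙ) (max b₁ b₂) := by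
  obtain ⟨C₁, hC₁, R₁, hR₁, hbound₁⟩ := h₁
  obtain ⟨C₂, hC₂, R₂, hR₂, hbound₂⟩ := h₂
  set μ₁ := Measure.map X₁ ℙ with hμ₁
  set μ₂ := Measure.map X₂ ℙ with hμ₂
  haveI : IsProbabilityMeasure μ₁ := Measure.isProbabilityMeasure_map hX₁.aemeasurable
  haveI : IsProbabilityMeasure μ₂ := Measure.isProbabilityMeasure_map hX₂.aemeasurable
  have hmapmap : Measure.map (fun ω => combineE (X₁ ω) (X₂ ω)) ℙ
      = Measure.map (fun p : EuclideanSpace ℝ (Fin d₁) × EuclideanSpace ℝ (Fin d₂) =>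
          combineE p.1 p.2) (μ₁.prod μ₂) := by
    rw [hμ₁, hμ₂,
      ← (indepFun_iff_map_prod_eq_prod_map_map hX₁.aemeasurable hX₂.aemeasurable).mp hindep,
      Measure.map_map measurable_combineE (hX₁.prodMk hX₂)]
    rfl
  have key : ∀ t, charFn (Measure.map (fun ω => combineE (X₁ ω) (X₂ ω)) ℙ) t
      = charFn μ₁ (splitE₁ t) * charFn μ₂ (splitE₂ t) := by
    intro t
    rw [hmapmap, charFn, integral_map measurable_combineE.aemeasurable
      (continuous_charFn_integrand t).aestronglyMeasurable]
    have hin : ∀ (x₁ : EuclideanSpace ℝ (Fin d₁)) (x₂ : EuclideanSpace ℝ (Fin d₂)),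
        (⟪t, combineE x₁ x₂⟫ : ℝ) = ⟪splitE₁ t, x₁⟫ + ⟪splitE₂ t, x₂⟫ := by
      intro x₁ x₂
      conv_lhs => rw [← combine_splitE t]
      exact inner_combineE _ _ _ _
    calc ∫ p, Complex.exp ((⟪t, combineE p.1 p.2⟫ : ℝ) * Complex.I) ∂(μ₁.prod μ₂)
        = ∫ p : EuclideanSpace ℝ (Fin d₁) × EuclideanSpace ℝ (Fin d₂),
            (Complex.exp ((⟪splitE₁ t, p.1⟫ : ℝ) * Complex.I)
              * Complex.exp ((⟪splitE₂ t, p.2⟫ : ℝ) * Complex.I)) ∂(μ₁.prod μ₂) := by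
          congr 1; funext p
          rw [hin p.1 p.2, ← Complex.exp_add]
          push_cast
          ring_nf
      _ = charFn μ₁ (splitE₁ t) * charFn μ₂ (splitE₂ t) :=
          integral_prod_mul (fun x => Complex.exp ((⟪splitE₁ t, x⟫ : ℝ) * Complex.I))
            (fun y => Complex.exp ((⟪splitE₂ t, y⟫ : ℝ) * Complex.I))
  have hnorm : ∀ t : EuclideanSpace ℝ (Fin (d₁ + d₂)),
      ‖t‖ ^ 2 = ‖splitE₁ t‖ ^ 2 + ‖splitE₂ t‖ ^ 2 := by
    intro t
    rw [← real_inner_self_eq_norm_sq, ← real_inner_self_eq_norm_sq, ← real_inner_self_eq_norm_sq]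
    conv_lhs => rw [← combine_splitE t]
    exact inner_combineE _ _ _ _
  refine ⟨min C₁ C₂, lt_min hC₁ hC₂, max 1 (Real.sqrt (R₁ ^ 2 + R₂ ^ 2)),
    lt_of_lt_of_le one_pos (le_max_left _ _), fun t ht => ?_⟩
  have h1t : 1 < ‖t‖ := lt_of_le_of_lt (le_max_left _ _) ht
  have hsq : R₁ ^ 2 + R₂ ^ 2 < ‖splitE₁ t‖ ^ 2 + ‖splitE₂ t‖ ^ 2 := by
    rw [← hnorm]
    have h1 : Real.sqrt (R₁ ^ 2 + R₂ ^ 2) < ‖t‖ := lt_of_le_of_lt (le_max_right _ _) ht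
    have h2 : (0:ℝ) ≤ R₁ ^ 2 + R₂ ^ 2 := by positivity
    calc R₁ ^ 2 + R₂ ^ 2 = Real.sqrt (R₁ ^ 2 + R₂ ^ 2) ^ 2 := (Real.sq_sqrt h2).symm
      _ < ‖t‖ ^ 2 := by
          apply pow_lt_pow_left₀ h1 (Real.sqrt_nonneg _)
          norm_num
  rw [key t, norm_mul]
  by_cases hc : R₁ < ‖splitE₁ t‖
  · have ht₁pos : 0 < ‖splitE₁ t‖ := lt_trans hR₁ hc
    have hle : ‖splitE₁ t‖ ≤ ‖t‖ := by
      nlinarith [hnorm t, norm_nonneg (splitE₂ t), norm_nonneg t, norm_nonneg (splitE₁ t)]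
    have hpowle : ‖splitE₁ t‖ ^ b₁ ≤ ‖t‖ ^ max b₁ b₂ :=
      le_trans (Real.rpow_le_rpow ht₁pos.le hle hb₁.le)
        (Real.rpow_le_rpow_of_exponent_le h1t.le (le_max_left _ _))
    have hdiv : min C₁ C₂ / ‖t‖ ^ max b₁ b₂ ≤ C₁ / ‖splitE₁ t‖ ^ b₁ :=
      div_le_div₀ hC₁.le (min_le_left _ _) (Real.rpow_pos_of_pos ht₁pos b₁) hpowle
    calc ‖charFn μ₁ (splitE₁ t)‖ * ‖charFn μ₂ (splitE₂ t)‖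
        ≤ ‖charFn μ₁ (splitE₁ t)‖ * 1 := by
          gcongr
          exact norm_charFn_le_one μ₂ _
      _ = ‖charFn μ₁ (splitE₁ t)‖ := mul_one _
      _ ≤ 1 - C₁ / ‖splitE₁ t‖ ^ b₁ := hbound₁ _ hc
      _ ≤ 1 - min C₁ C₂ / ‖t‖ ^ max b₁ b₂ := by linarith
  · push_neg at hc
    have hc₂ : R₂ < ‖splitE₂ t‖ := by
      nlinarith [norm_nonneg (splitE₁ t), norm_nonneg (splitE₂ t), hR₁.le, hR₂.le]
    have ht₂pos : 0 < ‖splitE₂ t‖ := lt_trans hR₂ hc₂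
    have hle : ‖splitE₂ t‖ ≤ ‖t‖ := by
      nlinarith [hnorm t, norm_nonneg (splitE₂ t), norm_nonneg t, norm_nonneg (splitE₁ t)]
    have hpowle : ‖splitE₂ t‖ ^ b₂ ≤ ‖t‖ ^ max b₁ b₂ :=
      le_trans (Real.rpow_le_rpow ht₂pos.le hle hb₂.le)
        (Real.rpow_le_rpow_of_exponent_le h1t.le (le_max_right _ _))
    have hdiv : min C₁ C₂ / ‖t‖ ^ max b₁ b₂ ≤ C₂ / ‖splitE₂ t‖ ^ b₂ :=
      div_le_div₀ hC₂.le (min_le_right _ _) (Real.rpow_pos_of_pos ht₂pos b₂) hpowle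
    calc ‖charFn μ₁ (splitE₁ t)‖ * ‖charFn μ₂ (splitE₂ t)‖
        ≤ 1 * ‖charFn μ₂ (splitE₂ t)‖ := by
          gcongr
          exact norm_charFn_le_one μ₁ _
      _ = ‖charFn μ₂ (splitE₂ t)‖ := one_mul _
      _ ≤ 1 - C₂ / ‖splitE₂ t‖ ^ b₂ := hbound₂ _ hc₂
      _ ≤ 1 - min C₁ C₂ / ‖t‖ ^ max b₁ b₂ := by linarith

/-- Tensorization of the weak Cramer condition: if `X₁ ∈ C(d₁,b₁)` and `X₂ ∈ C(d₂,b₂)` are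
independent, then `(X₁,X₂) ∈ C(d₁+d₂, max b₁ b₂)`. -/
theorem statement1
    {Ω : Type*} [MeasureSpace Ω] [IsProbabilityMeasure (ℙ : Measure Ω)]
    {d₁ d₂ : ℕ}
    (X₁ : Ω → EuclideanSpace ℝ (Fin d₁)) (X₂ : Ω → EuclideanSpace ℝ (Fin d₂))
    (hX₁ : Measurable X₁) (hX₂ : Measurable X₂)
    (hindep : IndepFun X₁ X₂ ℙ)
    {b₁ b₂ : ℝ} (hb₁ : 0 < b₁) (hb₂ : 0 < b₂)
    (h₁ : memClassC (Measure.map X₁ ℙ) b₁)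
    (h₂ : memClassC (Measure.map X₂ ℙ) b₂) :
    memClassC (Measure.map
      (fun ω => (WithLp.equiv 2 (Fin (d₁ + d₂) → ℝ)).symm (fun i : Fin (d₁ + d₂) =>
        Sum.elim (fun j => WithLp.equiv 2 (Fin d₁ → ℝ) (X₁ ω) j)
          (fun j => WithLp.equiv 2 (Fin d₂ → ℝ) (X₂ ω) j) (finSumFinEquiv.symm i))) ℙ)
      (max b₁ b₂) := by
  exact statement1' X₁ X₂ hX₁ hX₂ hindep hb₁ hb₂ h₁ h₂
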